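/- Let p be a prime with p ≡ 1 (mod 4), and let k ∈ F_p satisfy k² = -1/4. Let f be a monic irreducible polynomial of degree n ≥ 1 over F_p, and suppose f^{Q_k} is not irreducible over F_p, so that f^{Q_k} is the product of the minimal polynomials over F_p of α and of α⁻¹ for some nonzero α ∈ F_{p^n}. Then at least one of α and α⁻¹ is not θ_k-periodic. -/

import Mathlib

/-- The `Q_k`-transform of a polynomial `f` of degree `n` with coefficients
`f_0, …, f_n`: `f^{Q_k}(x) = k^{-n} · Σ_{j=0}^{n} f_j k^j (x²+1)^j x^{n-j}`,
which equals `(x/k)^n · f(k·(x + x⁻¹))` for all `x ≠ 0`. -/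
noncomputable def Qtransform {F : Type*} [Field F] (k : F) (f : Polynomial F) :
    Polynomial F :=
  Polynomial.C (k⁻¹ ^ f.natDegree) *
    ∑ j ∈ Finset.range (f.natDegree + 1),
      Polynomial.C (f.coeff j * k ^ j) * (Polynomial.X ^ 2 + 1) ^ j *
        Polynomial.X ^ (f.natDegree - j)

/- The map `θ_k` on the projective line `P¹(F) = F ∪ {∞}`, where `∞` is
modelled by `none` and elements of `F` by `some x`:
`θ_k(0) = θ_k(∞) = ∞` and `θ_k(x) = k·(x + x⁻¹)` for `x ≠ 0`. -/
open Classical in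
noncomputable def theta {F : Type*} [Field F] (k : F) : Option F → Option F
  | none => none
  | some x => if x = 0 then none else some (k * (x + x⁻¹))

/-- An element `y ∈ P¹(F_q)` is `θ_k`-periodic if `θ_k^r(y) = y` for some `r ≥ 1`. -/
def IsThetaPeriodic {F : Type*} [Field F] (k : F) (y : Option F) : Prop :=
  ∃ r : ℕ, 1 ≤ r ∧ (theta k)^[r] y = y

/-- `θ_k` is injective on periodic points. -/
lemma theta_injOn_periodic {F : Type*} [Field F] (k : F) {x y : Option F}
    (hx : IsThetaPeriodic k x) (hy : IsThetaPeriodic k y)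
    (hxy : theta k x = theta k y) : x = y := by
  obtain ⟨r, hr1, hrx⟩ := hx
  obtain ⟨s, hs1, hsy⟩ := hy
  have hxr : (theta k)^[r * s] x = x := by
    rw [Function.iterate_mul]; exact Function.iterate_fixed hrx s
  have hys : (theta k)^[r * s] y = y := by
    rw [mul_comm, Function.iterate_mul]; exact Function.iterate_fixed hsy r
  have hrs : 1 ≤ r * s := Nat.one_le_iff_ne_zero.mpr (by positivity)
  have hsplit : r * s = (r * s - 1) + 1 := by omega
  calc x = (theta k)^[r * s] x := hxr.symm
    _ = (theta k)^[r * s - 1] (theta k x) := by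
        conv_lhs => rw [hsplit, Function.iterate_succ_apply]
    _ = (theta k)^[r * s - 1] (theta k y) := by rw [hxy]
    _ = (theta k)^[r * s] y := by conv_rhs => rw [hsplit, Function.iterate_succ_apply]
    _ = y := hys

lemma theta_some {F : Type*} [Field F] (k : F) {x : F} (hx : x ≠ 0) :
    theta k (some x) = some (k * (x + x⁻¹)) := by
  simp [theta, hx]

lemma theta_zero {F : Type*} [Field F] (k : F) : theta k (some (0 : F)) = none := by
  simp [theta]

theorem not_periodic_of_Qtransform_reducible (p n : ℕ) [Fact p.Prime]
    (hp4 : p % 4 = 1) (k : ZMod p) (hk : k ^ 2 = -(1 / 4))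
    (f : Polynomial (ZMod p)) (hmonic : f.Monic) (hirr : Irreducible f)
    (hdeg : f.natDegree = n) (hn : 1 ≤ n)
    (hred : ¬ Irreducible (Qtransform k f))
    (α : GaloisField p n) (hα : α ≠ 0)
    (hfact : Qtransform k f = minpoly (ZMod p) α * minpoly (ZMod p) α⁻¹) :
    ¬ IsThetaPeriodic (algebraMap (ZMod p) (GaloisField p n) k) (some α) ∨
      ¬ IsThetaPeriodic (algebraMap (ZMod p) (GaloisField p n) k) (some α⁻¹) := by
  by_contra h
  push_neg at h
  obtain ⟨h1, h2⟩ := h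
  set K : ZMod p →+* GaloisField p n := algebraMap (ZMod p) (GaloisField p n) with hK
  have hα' : α⁻¹ ≠ 0 := inv_ne_zero hα
  -- θ(α) = θ(α⁻¹)
  have hteq : theta (K k) (some α) = theta (K k) (some α⁻¹) := by
    rw [theta_some (K k) hα, theta_some (K k) hα', inv_inv, add_comm]
  have heq := theta_injOn_periodic (K k) h1 h2 hteq
  have hαinv : α = α⁻¹ := Option.some.inj heq
  have hα2 : α * α = 1 := by nth_rewrite 2 [hαinv]; exact mul_inv_cancel₀ hα
  -- char facts
  have hp2 : p ≠ 2 := by intro h; rw [h] at hp4; norm_num at hp4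
  have h2F : (2 : GaloisField p n) ≠ 0 := by
    intro h
    have : ((2 : ℕ) : GaloisField p n) = 0 := by exact_mod_cast h
    have hd := (CharP.cast_eq_zero_iff (GaloisField p n) p 2).mp this
    exact hp2 ((Nat.prime_dvd_prime_iff_eq (Fact.out) Nat.prime_two).mp hd)
  have h4F : (4 : GaloisField p n) ≠ 0 := by
    have h42 : (4 : GaloisField p n) = 2 * 2 := by norm_num
    rw [h42]; exact mul_ne_zero h2F h2F
  have hk2 : (K k) ^ 2 = -(1 / 4 : GaloisField p n) := by
    rw [← map_pow, hk, map_neg, map_div₀, map_one, map_ofNat]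
  -- the image c of α
  set c : GaloisField p n := K k * (α + α⁻¹) with hc
  have hc2 : c ^ 2 = -1 := by
    have hexp : c ^ 2 = (K k) ^ 2 * (α + α⁻¹) ^ 2 := by rw [hc]; ring
    have hsum : α + α⁻¹ = 2 * α := by rw [← hαinv]; ring
    rw [hexp, hk2, hsum]
    have : (2 * α) ^ 2 = 4 * (α * α) := by ring
    rw [this, hα2]
    field_simp
  have hcne : c ≠ 0 := by
    intro h
    rw [h] at hc2
    simp at hc2
  have hcinv : c⁻¹ = -c := by
    apply inv_eq_of_mul_eq_one_right
    rw [mul_neg, ← sq, hc2, neg_neg]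
  have hcsum : c + c⁻¹ = 0 := by rw [hcinv]; ring
  -- the orbit of α hits ∞
  have step1 : theta (K k) (some α) = some c := theta_some (K k) hα
  have step2 : theta (K k) (some c) = some 0 := by
    rw [theta_some (K k) hcne, hcsum, mul_zero]
  have step3 : theta (K k) (some (0 : GaloisField p n)) = none := theta_zero (K k)
  have hnone : theta (K k) none = none := rfl
  have h3 : (theta (K k))^[3] (some α) = none := by
    rw [(by norm_num : (3 : ℕ) = 1 + 1 + 1)]
    rw [Function.iterate_add_apply, Function.iterate_add_apply]
    simp only [Function.iterate_one]
    rw [step1, step2, step3]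
  obtain ⟨r, hr, hit⟩ := h1
  have hit3 : (theta (K k))^[r * 3] (some α) = some α := by
    rw [Function.iterate_mul]
    exact Function.iterate_fixed hit 3
  have hnone3 : (theta (K k))^[r * 3] (some α) = none := by
    rw [show r * 3 = (r * 3 - 3) + 3 by omega, Function.iterate_add_apply, h3]
    exact Function.iterate_fixed hnone _
  rw [hit3] at hnone3
  exact Option.some_ne_none _ hnone3
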